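/- Let X be a topological space and A ⊆ X a countable subset which is discrete in its subspace topology. If there exists a continuous mapping φ : C_p*(A) → C_p(X) with φ(y)|_A = y for every y ∈ C_p*(A), then A is strongly functionally discrete in X. -/

import Mathlib

open Set Topology
open Filter

/-- `C_p(X)`: the continuous real-valued functions on `X`, topologized by pointwise
convergence (i.e. as a subspace of `X → ℝ` with the product topology). -/
abbrev Cp (X : Type*) [TopologicalSpace X] : Type _ := {f : X → ℝ // Continuous f}

/-- `C_p*(X)`: the bounded continuous real-valued functions on `X`, topologized by
pointwise convergence. -/
abbrev CpStar (X : Type*) [TopologicalSpace X] : Type _ :=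
  {f : X → ℝ // Continuous f ∧ ∃ M : ℝ, ∀ x, |f x| ≤ M}

/-- A set is functionally open (a cozero set) if it is the cozero set of a
continuous real-valued function. -/
def FunctionallyOpen {X : Type*} [TopologicalSpace X] (U : Set X) : Prop :=
  ∃ f : X → ℝ, Continuous f ∧ U = f ⁻¹' ({0}ᶜ)

/-- A subset `A` is strongly functionally discrete in `X` if there is a family of
functionally open sets `G a ∋ a` (for `a ∈ A`) which is discrete in `X`: every point
of `X` has a neighborhood meeting `G a` for at most one `a ∈ A`. -/
def StronglyFunctionallyDiscrete {X : Type*} [TopologicalSpace X] (A : Set X) : Prop :=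
  ∃ G : A → Set X,
    (∀ a : A, (a : X) ∈ G a) ∧
    (∀ a : A, FunctionallyOpen (G a)) ∧
    (∀ x : X, ∃ V ∈ 𝓝 x, {a : A | (V ∩ G a).Nonempty}.Subsingleton)

/-- If `A` is a countable discrete subspace of `X` and there is a continuous extender
`φ : C_p*(A) → C_p(X)`, then `A` is strongly functionally discrete in `X`. -/
theorem stmt_2 {X : Type*} [TopologicalSpace X] (A : Set X)
    (hcount : A.Countable) (hdisc : DiscreteTopology A)
    (φ : CpStar A → Cp X) (hφ : Continuous φ)
    (hext : ∀ y : CpStar A, ∀ a : A, (φ y).1 a = y.1 a) :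
    StronglyFunctionallyDiscrete A := by
  have hA : Countable A := hcount.to_subtype
  obtain ⟨ι, hι⟩ : ∃ f : A → ℕ, Function.Injective f :=
    (countable_iff_exists_injective ↥A).mp hA
  set Y0 : CpStar A := ⟨fun _ => 0, continuous_const, 0, by simp⟩ with hY0
  set Y : ℕ → CpStar A := fun k =>
    ⟨fun a => if k ≤ ι a then 1 else 0, continuous_of_discreteTopology, 1,
      fun a => by simp only; split <;> norm_num⟩ with hY
  set σ : ℕ → X → ℝ := fun k x => (φ (Y k)).1 x - (φ Y0).1 x with hσdef
  have hσc : ∀ k, Continuous (σ k) := fun k => ((φ (Y k)).2).sub ((φ Y0).2)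
  have hσa : ∀ (k) (a : A), σ k a = if k ≤ ι a then 1 else 0 := by
    intro k a
    simp only [hσdef, hext (Y k) a, hext Y0 a]; simp [hY, hY0]
  have hYt : Tendsto Y atTop (𝓝 Y0) := by
    rw [tendsto_subtype_rng, tendsto_pi_nhds]
    intro a
    refine tendsto_const_nhds.congr' ?_
    filter_upwards [eventually_ge_atTop (ι a + 1)] with k hk
    have : ¬ (k ≤ ι a) := by omega
    simp [hY, hY0, this]
  have hσ0 : ∀ x, Tendsto (fun k => σ k x) atTop (𝓝 0) := by
    intro x
    have h1 : Tendsto (fun k => (φ (Y k)).1 x) atTop (𝓝 ((φ Y0).1 x)) := by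
      have h2 := (hφ.tendsto Y0).comp hYt
      exact (((continuous_apply x).comp continuous_subtype_val).tendsto _).comp h2
    simpa using h1.sub (tendsto_const_nhds : Tendsto (fun _ : ℕ => (φ Y0).1 x) atTop _)
  have hmax : ∀ c : ℝ, max c 0 ≠ 0 ↔ 0 < c := by
    intro c
    constructor
    · intro hne
      by_contra hle
      exact hne (max_eq_right (not_lt.mp hle))
    · intro hc
      rw [max_eq_left hc.le]
      exact hc.ne'
  set G : A → Set X := fun a =>
    (fun x => (∏ k ∈ Finset.range (ι a + 1), max (σ k x - 2/3) 0) *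
      max (1/3 - σ (ι a + 1) x) 0) ⁻¹' ({0}ᶜ) with hG
  have hGmem : ∀ (a : A) (x : X),
      x ∈ G a ↔ (∀ k ≤ ι a, 2/3 < σ k x) ∧ σ (ι a + 1) x < 1/3 := by
    intro a x
    simp only [hG, mem_preimage, mem_compl_iff, mem_singleton_iff, ← ne_eq]
    rw [mul_ne_zero_iff, Finset.prod_ne_zero_iff]
    constructor
    · rintro ⟨h1, h2⟩
      refine ⟨fun k hk => ?_, ?_⟩
      · have := (hmax _).mp (h1 k (Finset.mem_range.mpr (by omega)))
        linarith
      · have := (hmax _).mp h2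
        linarith
    · rintro ⟨h1, h2⟩
      refine ⟨fun k hk => (hmax _).mpr ?_, (hmax _).mpr ?_⟩
      · have := h1 k (Nat.lt_succ_iff.mp (Finset.mem_range.mp hk))
        linarith
      · linarith
  refine ⟨G, fun a => ?_, fun a => ⟨_, ?_, rfl⟩, fun x => ?_⟩
  · refine (hGmem a a).mpr ⟨fun k hk => ?_, ?_⟩
    · rw [hσa]
      simp only [if_pos hk]
      norm_num
    · rw [hσa]
      have : ¬ (ι a + 1 ≤ ι a) := by omega
      simp only [if_neg this]
      norm_num
  · exact (continuous_finset_prod _ fun k _ =>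
      ((hσc k).sub continuous_const).max continuous_const).mul
      ((continuous_const.sub (hσc _)).max continuous_const)
  · have hex : ∃ k, σ k x < 1/2 := by
      have h12 : ∀ᶠ y : ℝ in 𝓝 0, y < 1/2 := by
        filter_upwards [Iio_mem_nhds (show (0:ℝ) < 1/2 by norm_num)] with y hy using hy
      exact ((hσ0 x).eventually h12).exists
    set m := Nat.find hex with hm
    have hms : σ m x < 1/2 := Nat.find_spec hex
    have hmin : ∀ k < m, ¬ σ k x < 1/2 := fun k hk => Nat.find_min hex hk
    set V : Set X := {z | (∀ k < m, 1/3 < σ k z) ∧ σ m z < 2/3} with hV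
    have hVopen : IsOpen V := by
      have hVeq : V = (⋂ k ∈ Finset.range m, (σ k) ⁻¹' Ioi (1/3)) ∩ ((σ m) ⁻¹' Iio (2/3)) := by
        ext z
        simp [hV, Finset.mem_range]
      rw [hVeq]
      exact (isOpen_biInter_finset fun k _ =>
        isOpen_Ioi.preimage (hσc k)).inter (isOpen_Iio.preimage (hσc m))
    refine ⟨V, hVopen.mem_nhds ⟨fun k hk => ?_, by linarith⟩, ?_⟩
    · have := not_lt.mp (hmin k hk)
      linarith
    · have key : ∀ c : A, (V ∩ G c).Nonempty → ι c + 1 = m := by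
        rintro c ⟨z, hzV, hzG⟩
        obtain ⟨hz1, hz2⟩ := (hGmem c z).mp hzG
        obtain ⟨hz3, hz4⟩ := hzV
        have h5 : ι c < m := by
          by_contra h
          have := hz1 m (not_lt.mp h)
          linarith
        have h6 : ¬ (ι c + 1 < m) := fun h => by
          have := hz3 _ h
          linarith
        omega
      intro a ha b hb
      exact hι (by have h1 := key a ha; have h2 := key b hb; omega)
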